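/- Let T > 0, α ∈ [0,1), λ ∈ (α,1), K > 0, and let d : (0,T] → ℝ be a measurable function with |d(s)| ≤ K s^{−α} for all s ∈ (0,T]. Then there exists a constant C > 0, depending only on T, α, λ and K, such that for every G ≥ 0 and every g : [0,T] → ℝ with g(0) = 0 and |g(t) − g(s)| ≤ G|t − s|^λ for all s, t ∈ [0,T], the function I₂g(t) = ∫₀^t d(t−s)(g(t) − g(s)) ds is well defined on [0,T], satisfies |I₂g(t)| ≤ C G t^{λ−α} for all t ∈ [0,T] (so I₂g(0) = 0), and satisfies |I₂g(t+h) − I₂g(t)| ≤ C G h^{λ−α} for all t ≥ 0 and h ∈ (0,1) with t + h ≤ T. -/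

import Mathlib

open MeasureTheory Set intervalIntegral Filter

set_option maxHeartbeats 1000000

/-- continuity of the operator I₂ from C₀^λ to C₀^{λ-α} (Lemma B). -/
theorem stmt_17 (T α lam K : ℝ) (hT : 0 < T) (hα : α ∈ Set.Ico (0:ℝ) 1)
    (hlam : lam ∈ Set.Ioo α 1) (hK : 0 < K) (d : ℝ → ℝ) (hd : Measurable d)
    (hdb : ∀ s ∈ Set.Ioc (0:ℝ) T, |d s| ≤ K * s ^ (-α)) :
    ∃ C > 0, ∀ G : ℝ, 0 ≤ G → ∀ g : ℝ → ℝ, g 0 = 0 →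
      (∀ s ∈ Set.Icc (0:ℝ) T, ∀ t ∈ Set.Icc (0:ℝ) T, |g t - g s| ≤ G * |t - s| ^ lam) →
      (∀ t ∈ Set.Icc (0:ℝ) T,
        MeasureTheory.IntegrableOn (fun s => d (t - s) * (g t - g s)) (Set.Ioc 0 t)) ∧
      (∀ t ∈ Set.Icc (0:ℝ) T,
        |∫ s in Set.Ioc (0:ℝ) t, d (t - s) * (g t - g s)| ≤ C * G * t ^ (lam - α)) ∧
      (∀ t h : ℝ, 0 ≤ t → 0 < h → h < 1 → t + h ≤ T →
        |(∫ s in Set.Ioc (0:ℝ) (t + h), d (t + h - s) * (g (t + h) - g s)) -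
          ∫ s in Set.Ioc (0:ℝ) t, d (t - s) * (g t - g s)| ≤ C * G * h ^ (lam - α)) := by
  obtain ⟨hα0, hα1⟩ := hα
  obtain ⟨hal, hl1⟩ := hlam
  have hl0 : 0 < lam := lt_of_le_of_lt hα0 hal
  have hβ0 : 0 < lam - α := by linarith
  have hβ1 : lam - α < 1 := by linarith
  have h1α : 0 < 1 - α := by linarith
  have hT'1 : (1:ℝ) ≤ max 1 T := le_max_left _ _
  have hT'0 : (0:ℝ) < max 1 T := by linarith
  have hβp : (0:ℝ) < lam - α + 1 := by linarith
  refine ⟨K * max 1 T + 2*K/(lam - α + 1) + 2*K*(max 1 T)/(1-α), by positivity, ?_⟩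
  set T' := max 1 T with hT'def
  set C := K * T' + 2*K/(lam - α + 1) + 2*K*T'/(1-α) with hCdef
  have hC1 : K * T' ≤ C := by
    rw [hCdef]
    have : 0 < 2*K/(lam - α + 1) := by positivity
    have : 0 < 2*K*T'/(1-α) := by positivity
    linarith
  intro G hG g hg0 hgH
  -- continuity of g on [0,T]
  have hg_cont : ContinuousOn g (Icc 0 T) := by
    intro x hx
    rw [Metric.continuousWithinAt_iff]
    intro ε hε
    refine ⟨(ε / (G + 1)) ^ (1/lam), by positivity, fun y hy hyx => ?_⟩
    have hr0 : (0:ℝ) ≤ |y - x| := abs_nonneg _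
    have h1 : |y - x| ^ lam < ((ε / (G + 1)) ^ (1/lam)) ^ lam := by
      apply Real.rpow_lt_rpow hr0 _ hl0
      rwa [Real.dist_eq] at hyx
    have h2 : ((ε / (G + 1)) ^ (1/lam)) ^ lam = ε / (G + 1) := by
      rw [← Real.rpow_mul (by positivity), one_div_mul_cancel (ne_of_gt hl0), Real.rpow_one]
    have h3 : |y - x| ^ lam < ε / (G + 1) := h2 ▸ h1
    have hrp : (0:ℝ) ≤ |y - x| ^ lam := Real.rpow_nonneg hr0 lam
    calc dist (g y) (g x) ≤ G * |y - x| ^ lam := by rw [Real.dist_eq]; exact hgH x hx y hy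
      _ ≤ (G + 1) * (|y - x| ^ lam) := by nlinarith
      _ < (G + 1) * (ε / (G + 1)) := by apply mul_lt_mul_of_pos_left h3; linarith
      _ = ε := by field_simp
  -- pointwise bound on the substituted integrand
  have hbnd : ∀ τ, τ ∈ Icc (0:ℝ) T → ∀ u, 0 < u → u ≤ τ →
      |d u * (g τ - g (τ - u))| ≤ K * G * u ^ (lam - α) := by
    intro τ hτ u hu0 huτ
    have huT : u ∈ Ioc (0:ℝ) T := ⟨hu0, huτ.trans hτ.2⟩
    have h1 : |d u| ≤ K * u ^ (-α) := hdb u huT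
    have h2 : |g τ - g (τ - u)| ≤ G * u ^ lam := by
      have := hgH (τ - u) ⟨by linarith [hτ.1], by linarith [hτ.2]⟩ τ hτ
      have he : τ - (τ - u) = u := by ring
      rwa [he, abs_of_pos hu0] at this
    rw [abs_mul]
    calc |d u| * |g τ - g (τ - u)| ≤ (K * u ^ (-α)) * (G * u ^ lam) := by
          apply mul_le_mul h1 h2 (abs_nonneg _) (by positivity)
      _ = K * G * u ^ (lam - α) := by
          rw [show lam - α = -α + lam by ring, Real.rpow_add hu0]; ring
  -- integrability of the substituted integrand
  have hIntOn : ∀ τ, τ ∈ Icc (0:ℝ) T →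
      IntegrableOn (fun u => d u * (g τ - g (τ - u))) (Ioc 0 τ) := by
    intro τ hτ
    have hmg : AEMeasurable (fun u => g (τ - u)) (volume.restrict (Ioc 0 τ)) := by
      have hc : ContinuousOn (fun u => g (τ - u)) (Icc 0 τ) := by
        apply hg_cont.comp ((continuous_const.sub continuous_id).continuousOn)
        intro u hu
        exact ⟨by simp [hu.2], by simp; linarith [hu.1, hτ.2]⟩
      exact (hc.aemeasurable measurableSet_Icc).mono_measure
        (Measure.restrict_mono Ioc_subset_Icc_self le_rfl)
    have hmeas : AEStronglyMeasurable (fun u => d u * (g τ - g (τ - u)))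
        (volume.restrict (Ioc 0 τ)) :=
      (hd.aemeasurable.mul (aemeasurable_const.sub hmg)).aestronglyMeasurable
    have hbint : IntegrableOn (fun u => K * G * u ^ (lam - α)) (Ioc 0 τ) := by
      have := (intervalIntegral.intervalIntegrable_rpow' (a := 0) (b := τ)
        (r := lam - α) (by linarith))
      exact ((intervalIntegrable_iff_integrableOn_Ioc_of_le hτ.1).mp this).const_mul _
    apply Integrable.mono' hbint hmeas
    rw [ae_restrict_iff' measurableSet_Ioc]
    exact Filter.Eventually.of_forall (fun u hu => by
      simpa [Real.norm_eq_abs, abs_mul] using hbnd τ hτ u hu.1 hu.2)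
  -- interval integrability on subintervals
  have hII : ∀ τ, τ ∈ Icc (0:ℝ) T → ∀ a b : ℝ, a ∈ Icc 0 τ → b ∈ Icc 0 τ →
      IntervalIntegrable (fun u => d u * (g τ - g (τ - u))) volume a b := by
    intro τ hτ a b ha hb
    rw [intervalIntegrable_iff]
    apply (hIntOn τ hτ).mono_set
    rw [Set.uIoc]
    intro x hx
    exact ⟨lt_of_le_of_lt (le_min ha.1 hb.1) hx.1, hx.2.trans (max_le ha.2 hb.2)⟩
  -- change of variables
  have hchg : ∀ t : ℝ, 0 ≤ t → (∫ s in Ioc (0:ℝ) t, d (t - s) * (g t - g s))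
      = ∫ u in (0:ℝ)..t, d u * (g t - g (t - u)) := by
    intro t ht
    rw [← intervalIntegral.integral_of_le ht]
    have := intervalIntegral.integral_comp_sub_left (a := 0) (b := t)
      (fun u => d u * (g t - g (t - u))) t
    simp only [sub_sub_cancel, sub_zero, sub_self] at this
    exact this
  -- the three claims
  have hT'bd : ∀ r : ℝ, 0 ≤ r → r ≤ 1 → ∀ x : ℝ, 0 ≤ x → x ≤ T → x ^ r ≤ T' := by
    intro r hr0 hr1 x hx0 hxT
    rcases le_or_gt x 1 with hx1 | hx1
    · exact (Real.rpow_le_one hx0 hx1 hr0).trans hT'1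
    · calc x ^ r ≤ x ^ (1:ℝ) := Real.rpow_le_rpow_of_exponent_le hx1.le hr1
        _ = x := Real.rpow_one x
        _ ≤ T' := hxT.trans (le_max_right _ _)
  -- part 1
  have part1 : ∀ t ∈ Icc (0:ℝ) T,
      IntegrableOn (fun s => d (t - s) * (g t - g s)) (Ioc 0 t) := by
    intro t ht
    have h1 : IntervalIntegrable (fun u => d u * (g t - g (t - u))) volume 0 t :=
      hII t ht 0 t ⟨le_rfl, ht.1⟩ ⟨ht.1, le_rfl⟩
    have h2 := (h1.comp_sub_left t).symm
    simp only [sub_zero, sub_self] at h2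
    rw [intervalIntegrable_iff_integrableOn_Ioc_of_le ht.1] at h2
    have he : (fun s => d (t - s) * (g t - g (t - (t - s))))
        = fun s => d (t - s) * (g t - g s) := by
      funext s; rw [sub_sub_cancel]
    rwa [he] at h2
  refine ⟨part1, ?_, ?_⟩
  -- part 2
  · intro t ht
    rcases eq_or_lt_of_le ht.1 with h0 | h0
    · simp [← h0, Real.zero_rpow (ne_of_gt hβ0)]
    rw [hchg t ht.1]
    have hb : |∫ u in (0:ℝ)..t, d u * (g t - g (t - u))|
        ≤ |∫ u in (0:ℝ)..t, K * G * u ^ (lam - α)| := by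
      rw [← Real.norm_eq_abs]
      apply intervalIntegral.norm_integral_le_abs_of_norm_le
      · rw [Set.uIoc_of_le ht.1, ae_restrict_iff' measurableSet_Ioc]
        exact Filter.Eventually.of_forall (fun u hu => by
          simpa [Real.norm_eq_abs, abs_mul] using hbnd t ht u hu.1 hu.2)
      · have := (intervalIntegral.intervalIntegrable_rpow' (a := 0) (b := t)
          (r := lam - α) (by linarith))
        exact this.const_mul _
    have hval : (∫ u in (0:ℝ)..t, K * G * u ^ (lam - α))
        = K * G * (t ^ (lam - α + 1) / (lam - α + 1)) := by
      rw [intervalIntegral.integral_const_mul, integral_rpow (Or.inl (by linarith)),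
        Real.zero_rpow (ne_of_gt hβp)]
      ring
    rw [hval] at hb
    have htβ : (0:ℝ) ≤ t ^ (lam - α) := Real.rpow_nonneg ht.1 _
    have hts : t ^ (lam - α + 1) = t ^ (lam - α) * t := by
      rw [Real.rpow_add h0, Real.rpow_one]
    have hb2 : K * G * (t ^ (lam - α + 1) / (lam - α + 1)) ≤ C * G * t ^ (lam - α) := by
      rw [hts]
      have htT' : t ≤ T' := ht.2.trans (le_max_right _ _)
      have h1 : K * G * (t ^ (lam - α) * t / (lam - α + 1)) ≤ K * G * (t ^ (lam - α) * T') := by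
        apply mul_le_mul_of_nonneg_left _ (by positivity)
        rw [div_le_iff₀ hβp]
        have h2 : t ^ (lam - α) * t ≤ t ^ (lam - α) * T' := by
          apply mul_le_mul_of_nonneg_left htT' htβ
        nlinarith [mul_nonneg htβ (le_trans (by linarith) htT' : (0:ℝ) ≤ T')]
      calc K * G * (t ^ (lam - α) * t / (lam - α + 1)) ≤ K * G * (t ^ (lam - α) * T') := h1
        _ = (K * T') * G * t ^ (lam - α) := by ring
        _ ≤ C * G * t ^ (lam - α) := by
            apply mul_le_mul_of_nonneg_right _ htβ
            apply mul_le_mul_of_nonneg_right hC1 hG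
    calc |∫ u in (0:ℝ)..t, d u * (g t - g (t - u))|
        ≤ |K * G * (t ^ (lam - α + 1) / (lam - α + 1))| := hb
      _ = K * G * (t ^ (lam - α + 1) / (lam - α + 1)) := by
          rw [abs_of_nonneg]; positivity
      _ ≤ C * G * t ^ (lam - α) := hb2
  -- part 3
  · intro t h ht0 hh0 hh1 hthT
    have hthT' : t + h ∈ Icc (0:ℝ) T := ⟨by linarith, hthT⟩
    have htT : t ∈ Icc (0:ℝ) T := ⟨ht0, by linarith⟩
    have hhb : h ^ lam ≤ h ^ (lam - α) :=
      Real.rpow_le_rpow_of_exponent_ge hh0 hh1.le (by linarith)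
    have hh' : h ≤ h ^ (lam - α) := by
      calc h = h ^ (1:ℝ) := (Real.rpow_one h).symm
        _ ≤ h ^ (lam - α) := Real.rpow_le_rpow_of_exponent_ge hh0 hh1.le (by linarith)
    have hhβ0 : (0:ℝ) ≤ h ^ (lam - α) := Real.rpow_nonneg hh0.le _
    rw [hchg (t + h) (by linarith), hchg t ht0]
    -- interval integrabilities
    have hF1a : IntervalIntegrable (fun u => d u * (g (t+h) - g (t+h-u))) volume 0 t :=
      hII (t+h) hthT' 0 t ⟨le_rfl, by linarith⟩ ⟨ht0, by linarith⟩
    have hF1b : IntervalIntegrable (fun u => d u * (g (t+h) - g (t+h-u))) volume t (t+h) :=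
      hII (t+h) hthT' t (t+h) ⟨ht0, by linarith⟩ ⟨by linarith, le_rfl⟩
    have hF2 : IntervalIntegrable (fun u => d u * (g t - g (t-u))) volume 0 t :=
      hII t htT 0 t ⟨le_rfl, ht0⟩ ⟨ht0, le_rfl⟩
    have hsplit : (∫ u in (0:ℝ)..(t+h), d u * (g (t+h) - g (t+h-u)))
        = (∫ u in (0:ℝ)..t, d u * (g (t+h) - g (t+h-u)))
          + ∫ u in t..(t+h), d u * (g (t+h) - g (t+h-u)) :=
      (intervalIntegral.integral_add_adjacent_intervals hF1a hF1b).symm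
    have hsub : (∫ u in (0:ℝ)..t, d u * (g (t+h) - g (t+h-u)))
        - (∫ u in (0:ℝ)..t, d u * (g t - g (t-u)))
        = ∫ u in (0:ℝ)..t, (d u * (g (t+h) - g (t+h-u)) - d u * (g t - g (t-u))) :=
      (intervalIntegral.integral_sub hF1a hF2).symm
    -- bound on A
    have hA : |∫ u in t..(t+h), d u * (g (t+h) - g (t+h-u))|
        ≤ (K * T') * (G * h ^ (lam - α)) := by
      have hc : ∀ x ∈ Set.uIoc t (t+h),
          ‖d x * (g (t+h) - g (t+h-x))‖ ≤ K * G * T' := by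
        intro x hx
        rw [Set.uIoc_of_le (by linarith)] at hx
        have h1 := hbnd (t+h) hthT' x (by linarith [hx.1]) hx.2
        have h2 : x ^ (lam - α) ≤ T' :=
          hT'bd (lam - α) hβ0.le hβ1.le x (by linarith [hx.1]) (hx.2.trans hthT)
        rw [Real.norm_eq_abs]
        calc |d x * (g (t+h) - g (t+h-x))| ≤ K * G * x ^ (lam - α) := h1
          _ ≤ K * G * T' := by
              apply mul_le_mul_of_nonneg_left h2 (by positivity)
      have := intervalIntegral.norm_integral_le_of_norm_le_const hc
      rw [Real.norm_eq_abs, show t + h - t = h by ring, abs_of_pos hh0] at this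
      calc |∫ u in t..(t+h), d u * (g (t+h) - g (t+h-u))| ≤ K * G * T' * h := this
        _ ≤ (K * T') * (G * h ^ (lam - α)) := by
            have := mul_le_mul_of_nonneg_left hh' (by positivity : (0:ℝ) ≤ K * G * T')
            nlinarith
    -- pointwise bounds on the difference
    have hb1 : ∀ u, 0 < u → u ≤ t →
        |d u * (g (t+h) - g (t+h-u)) - d u * (g t - g (t-u))|
          ≤ 2*K*G*u^(lam-α) := by
      intro u hu0 hut
      have h1 := hbnd (t+h) hthT' u hu0 (by linarith)
      have h2 := hbnd t htT u hu0 hut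
      calc |d u * (g (t+h) - g (t+h-u)) - d u * (g t - g (t-u))|
          ≤ |d u * (g (t+h) - g (t+h-u))| + |d u * (g t - g (t-u))| := abs_sub _ _
        _ ≤ 2*K*G*u^(lam-α) := by linarith
    have hb2 : ∀ u, 0 < u → u ≤ t →
        |d u * (g (t+h) - g (t+h-u)) - d u * (g t - g (t-u))|
          ≤ (2*K*G*h^lam) * u^(-α) := by
      intro u hu0 hut
      have hdu : |d u| ≤ K * u^(-α) := hdb u ⟨hu0, by linarith⟩
      have he : d u * (g (t+h) - g (t+h-u)) - d u * (g t - g (t-u))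
          = d u * ((g (t+h) - g t) - (g (t+h-u) - g (t-u))) := by ring
      have h1 : |g (t+h) - g t| ≤ G * h^lam := by
        have := hgH t htT (t+h) hthT'
        rwa [show t + h - t = h by ring, abs_of_pos hh0] at this
      have h2 : |g (t+h-u) - g (t-u)| ≤ G * h^lam := by
        have := hgH (t-u) ⟨by linarith, by linarith⟩ (t+h-u) ⟨by linarith, by linarith⟩
        rwa [show t + h - u - (t - u) = h by ring, abs_of_pos hh0] at this
      have h3 : |(g (t+h) - g t) - (g (t+h-u) - g (t-u))| ≤ G * h^lam + G * h^lam :=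
        (abs_sub _ _).trans (add_le_add h1 h2)
      rw [he, abs_mul]
      calc |d u| * |(g (t+h) - g t) - (g (t+h-u) - g (t-u))|
          ≤ (K * u^(-α)) * (G * h^lam + G * h^lam) :=
            mul_le_mul hdu h3 (abs_nonneg _) (by positivity)
        _ = (2*K*G*h^lam) * u^(-α) := by ring
    -- bound on pieces of the form ∫ a..b of the difference against u^β
    have hkey : ∀ a : ℝ, 0 ≤ a → a ≤ t →
        |∫ u in (0:ℝ)..a, (d u * (g (t+h) - g (t+h-u)) - d u * (g t - g (t-u)))|
          ≤ 2*K*G*(a^(lam-α+1)/(lam-α+1)) := by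
      intro a ha0 hat
      have hbint : IntervalIntegrable (fun u => 2*K*G*u^(lam-α)) volume 0 a :=
        (intervalIntegral.intervalIntegrable_rpow' (by linarith)).const_mul _
      have hb : |∫ u in (0:ℝ)..a, (d u * (g (t+h) - g (t+h-u)) - d u * (g t - g (t-u)))|
          ≤ |∫ u in (0:ℝ)..a, 2*K*G*u^(lam-α)| := by
        rw [← Real.norm_eq_abs]
        apply intervalIntegral.norm_integral_le_abs_of_norm_le _ hbint
        rw [Set.uIoc_of_le ha0, ae_restrict_iff' measurableSet_Ioc]
        exact Filter.Eventually.of_forall (fun u hu => by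
          simpa [Real.norm_eq_abs] using hb1 u hu.1 (hu.2.trans hat))
      have hval : (∫ u in (0:ℝ)..a, 2*K*G*u^(lam-α))
          = 2*K*G*(a^(lam-α+1)/(lam-α+1)) := by
        rw [intervalIntegral.integral_const_mul, integral_rpow (Or.inl (by linarith)),
          Real.zero_rpow (ne_of_gt hβp)]
        ring
      rw [hval] at hb
      calc |∫ u in (0:ℝ)..a, (d u * (g (t+h) - g (t+h-u)) - d u * (g t - g (t-u)))|
          ≤ |2*K*G*(a^(lam-α+1)/(lam-α+1))| := hb
        _ = 2*K*G*(a^(lam-α+1)/(lam-α+1)) := by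
            rw [abs_of_nonneg]
            have : (0:ℝ) ≤ a ^ (lam-α+1) := Real.rpow_nonneg ha0 _
            positivity
    -- bound on B
    have hB : |∫ u in (0:ℝ)..t, (d u * (g (t+h) - g (t+h-u)) - d u * (g t - g (t-u)))|
        ≤ (2*K/(lam-α+1) + 2*K*T'/(1-α)) * (G * h ^ (lam - α)) := by
      have hcoef2 : (0:ℝ) ≤ 2*K*T'/(1-α) := by positivity
      rcases le_or_gt t h with hth | hth
      · -- t ≤ h
        have h1 := hkey t ht0 le_rfl
        have h2 : t ^ (lam-α+1) ≤ h ^ (lam-α) := by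
          calc t ^ (lam-α+1) ≤ h ^ (lam-α+1) := Real.rpow_le_rpow ht0 hth (by linarith)
            _ ≤ h ^ (lam-α) := Real.rpow_le_rpow_of_exponent_ge hh0 hh1.le (by linarith)
        have h3 : 2*K*G*(t^(lam-α+1)/(lam-α+1)) ≤ (2*K/(lam-α+1)) * (G * h ^ (lam-α)) := by
          have h4 := mul_le_mul_of_nonneg_left h2
            (show (0:ℝ) ≤ 2*K*G/(lam-α+1) by positivity)
          calc 2*K*G*(t^(lam-α+1)/(lam-α+1))
              = 2*K*G/(lam-α+1) * t^(lam-α+1) := by ring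
            _ ≤ 2*K*G/(lam-α+1) * h^(lam-α) := h4
            _ = 2*K/(lam-α+1) * (G * h^(lam-α)) := by ring
        have h5 : (2*K/(lam-α+1)) * (G*h^(lam-α))
            ≤ (2*K/(lam-α+1) + 2*K*T'/(1-α)) * (G*h^(lam-α)) :=
          mul_le_mul_of_nonneg_right (by linarith) (mul_nonneg hG hhβ0)
        exact (h1.trans h3).trans h5
      · -- h < t
        have hIId : ∀ a b : ℝ, a ∈ Icc (0:ℝ) t → b ∈ Icc (0:ℝ) t →
            IntervalIntegrable
              (fun u => d u * (g (t+h) - g (t+h-u)) - d u * (g t - g (t-u))) volume a b := by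
          intro a b ha hb
          exact (hII (t+h) hthT' a b ⟨ha.1, by linarith [ha.2]⟩ ⟨hb.1, by linarith [hb.2]⟩).sub
            (hII t htT a b ha hb)
        have hsplit2 : (∫ u in (0:ℝ)..t,
              (d u * (g (t+h) - g (t+h-u)) - d u * (g t - g (t-u))))
            = (∫ u in (0:ℝ)..h, (d u * (g (t+h) - g (t+h-u)) - d u * (g t - g (t-u))))
              + ∫ u in h..t, (d u * (g (t+h) - g (t+h-u)) - d u * (g t - g (t-u))) :=
          (intervalIntegral.integral_add_adjacent_intervals
            (hIId 0 h ⟨le_rfl, ht0⟩ ⟨hh0.le, hth.le⟩)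
            (hIId h t ⟨hh0.le, hth.le⟩ ⟨ht0, le_rfl⟩)).symm
        -- first piece
        have hp1 := hkey h hh0.le hth.le
        have hp1' : 2*K*G*(h^(lam-α+1)/(lam-α+1)) ≤ (2*K/(lam-α+1)) * (G * h ^ (lam-α)) := by
          have h2 : h ^ (lam-α+1) ≤ h ^ (lam-α) :=
            Real.rpow_le_rpow_of_exponent_ge hh0 hh1.le (by linarith)
          have h4 := mul_le_mul_of_nonneg_left h2
            (show (0:ℝ) ≤ 2*K*G/(lam-α+1) by positivity)
          calc 2*K*G*(h^(lam-α+1)/(lam-α+1))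
              = 2*K*G/(lam-α+1) * h^(lam-α+1) := by ring
            _ ≤ 2*K*G/(lam-α+1) * h^(lam-α) := h4
            _ = 2*K/(lam-α+1) * (G * h^(lam-α)) := by ring
        -- second piece
        have hbint2 : IntervalIntegrable (fun u => (2*K*G*h^lam) * u^(-α)) volume h t :=
          (intervalIntegral.intervalIntegrable_rpow' (by linarith)).const_mul _
        have hp2 : |∫ u in h..t, (d u * (g (t+h) - g (t+h-u)) - d u * (g t - g (t-u)))|
            ≤ |∫ u in h..t, (2*K*G*h^lam) * u^(-α)| := by
          rw [← Real.norm_eq_abs]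
          apply intervalIntegral.norm_integral_le_abs_of_norm_le _ hbint2
          rw [Set.uIoc_of_le hth.le, ae_restrict_iff' measurableSet_Ioc]
          exact Filter.Eventually.of_forall (fun u hu => by
            simpa [Real.norm_eq_abs] using hb2 u (by linarith [hu.1]) hu.2)
        have hval2 : (∫ u in h..t, (2*K*G*h^lam) * u^(-α))
            = (2*K*G*h^lam) * ((t^(-α+1) - h^(-α+1))/(-α+1)) := by
          rw [intervalIntegral.integral_const_mul, integral_rpow (Or.inl (by linarith))]
        have ht1 : t ^ (-α+1) ≤ T' := by
          have := hT'bd (1-α) h1α.le (by linarith) t ht0 (by linarith)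
          rwa [show (1:ℝ)-α = -α+1 by ring] at this
        have hh1' : (0:ℝ) ≤ h ^ (-α+1) := Real.rpow_nonneg hh0.le _
        have hlm : (0:ℝ) ≤ h ^ lam := Real.rpow_nonneg hh0.le _
        have hmono : h^(-α+1) ≤ t^(-α+1) :=
          Real.rpow_le_rpow hh0.le hth.le (by linarith)
        have hp2' : (2*K*G*h^lam) * ((t^(-α+1) - h^(-α+1))/(-α+1))
            ≤ (2*K*T'/(1-α)) * (G * h ^ (lam-α)) := by
          have hs : (t^(-α+1) - h^(-α+1))/(-α+1) ≤ T'/(-α+1) :=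
            div_le_div₀ (by linarith) (by linarith) (by linarith) le_rfl
          have hnn : (0:ℝ) ≤ 2*K*G*h^lam := mul_nonneg (by positivity) hlm
          have hstep : 2*K*G*h^lam ≤ 2*K*G*h^(lam-α) :=
            mul_le_mul_of_nonneg_left hhb (by positivity)
          calc (2*K*G*h^lam) * ((t^(-α+1) - h^(-α+1))/(-α+1))
              ≤ (2*K*G*h^lam) * (T'/(-α+1)) := mul_le_mul_of_nonneg_left hs hnn
            _ ≤ (2*K*G*h^(lam-α)) * (T'/(-α+1)) :=
                mul_le_mul_of_nonneg_right hstep (div_nonneg hT'0.le (by linarith))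
            _ = (2*K*T'/(1-α)) * (G * h^(lam-α)) := by
                rw [show (-α+1 : ℝ) = 1-α by ring]; ring
        calc |∫ u in (0:ℝ)..t, (d u * (g (t+h) - g (t+h-u)) - d u * (g t - g (t-u)))|
            ≤ |∫ u in (0:ℝ)..h, (d u * (g (t+h) - g (t+h-u)) - d u * (g t - g (t-u)))|
              + |∫ u in h..t, (d u * (g (t+h) - g (t+h-u)) - d u * (g t - g (t-u)))| := by
              rw [hsplit2]; exact abs_add_le _ _
          _ ≤ (2*K/(lam-α+1)) * (G * h ^ (lam-α)) + (2*K*T'/(1-α)) * (G * h ^ (lam-α)) := by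
              have habs : |(2*K*G*h^lam) * ((t^(-α+1) - h^(-α+1))/(-α+1))|
                  = (2*K*G*h^lam) * ((t^(-α+1) - h^(-α+1))/(-α+1)) := by
                rw [abs_of_nonneg]
                exact mul_nonneg (mul_nonneg (by positivity) hlm)
                  (div_nonneg (by linarith) (by linarith))
              have hp2'' : |∫ u in h..t,
                    (d u * (g (t+h) - g (t+h-u)) - d u * (g t - g (t-u)))|
                  ≤ (2*K*T'/(1-α)) * (G * h ^ (lam-α)) := by
                refine hp2.trans ?_
                rw [hval2, habs]
                exact hp2'
              exact add_le_add (hp1.trans hp1') hp2'' 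
          _ = (2*K/(lam-α+1) + 2*K*T'/(1-α)) * (G * h ^ (lam-α)) := by ring
    -- assemble
    calc |(∫ u in (0:ℝ)..(t+h), d u * (g (t+h) - g (t+h-u)))
          - ∫ u in (0:ℝ)..t, d u * (g t - g (t-u))|
        = |(∫ u in t..(t+h), d u * (g (t+h) - g (t+h-u)))
            + ∫ u in (0:ℝ)..t, (d u * (g (t+h) - g (t+h-u)) - d u * (g t - g (t-u)))| := by
          rw [hsplit, ← hsub]; congr 1; ring
      _ ≤ |∫ u in t..(t+h), d u * (g (t+h) - g (t+h-u))|
            + |∫ u in (0:ℝ)..t, (d u * (g (t+h) - g (t+h-u)) - d u * (g t - g (t-u)))| :=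
          abs_add_le _ _
      _ ≤ (K * T') * (G * h ^ (lam - α))
            + (2*K/(lam-α+1) + 2*K*T'/(1-α)) * (G * h ^ (lam - α)) := add_le_add hA hB
      _ = C * G * h ^ (lam - α) := by rw [hCdef]; ring
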